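/- Let θ > 0, c ≥ 0, B > 0 and suppose Γ : ℝ → (0,∞) satisfies -Γ''(z) ≥ -2θ·Γ(z) for |z| > R, with Γ(z) ≥ δ > 0 for |z| = R and Γ bounded. Then Γ(z) ≥ δ·e^{-√(2θ)(|z|-R)} for all |z| ≥ R. -/

import Mathlib

open Real Set Filter Topology

-- extract smoothness of derivatives from C²
lemma c2_parts {f : ℝ → ℝ} (hf : ContDiff ℝ 2 f) :
    Differentiable ℝ f ∧ Differentiable ℝ (deriv f) ∧ Continuous (deriv (deriv f)) := by
  have h2 : (2 : WithTop ℕ∞) = 1 + 1 := by norm_num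
  rw [h2] at hf
  obtain ⟨hd, -, h1⟩ := contDiff_succ_iff_deriv.mp hf
  obtain ⟨hd1, hc⟩ := contDiff_one_iff_deriv.mp h1
  exact ⟨hd, hd1, hc⟩

/-- Second derivative test: nonnegative second derivative at a local min of a C² function. -/
lemma deriv2_nonneg_of_isLocalMin {f : ℝ → ℝ} (hf : ContDiff ℝ 2 f) {x : ℝ}
    (hmin : IsLocalMin f x) : 0 ≤ deriv (deriv f) x := by
  obtain ⟨hd, hd1, hc⟩ := c2_parts hf
  by_contra hlt
  push_neg at hlt
  have hev : ∀ᶠ y in 𝓝 x, deriv (deriv f) y < 0 :=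
    hc.continuousAt.eventually_lt continuousAt_const hlt
  obtain ⟨a, ha, hball⟩ := Metric.eventually_nhds_iff.mp hev
  have hanti : StrictAntiOn (deriv f) (Ioo (x - a) (x + a)) := by
    apply strictAntiOn_of_deriv_neg (convex_Ioo _ _) (hd1.continuous.continuousOn)
    intro y hy
    rw [interior_Ioo] at hy
    apply hball
    rw [Real.dist_eq, abs_lt]
    exact ⟨by linarith [hy.1], by linarith [hy.2]⟩
  have hdx : deriv f x = 0 := hmin.deriv_eq_zero
  have hpos : ∀ y ∈ Ioo (x - a) x, 0 < deriv f y := by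
    intro y hy
    have := hanti ⟨hy.1, by linarith [hy.2]⟩ ⟨by linarith, by linarith⟩ hy.2
    rwa [hdx] at this
  have hmono : StrictMonoOn f (Icc (x - a/2) x) := by
    apply strictMonoOn_of_deriv_pos (convex_Icc _ _) hd.continuous.continuousOn
    intro y hy
    rw [interior_Icc] at hy
    exact hpos y ⟨by linarith [hy.1], hy.2⟩
  obtain ⟨b, hb, hbmin⟩ := Metric.eventually_nhds_iff.mp hmin
  set p := x - min a b / 4 with hp
  have hab : 0 < min a b := lt_min ha hb
  have h1 : f p < f x := by
    apply hmono ⟨by simp only [hp]; nlinarith [min_le_left a b], by simp only [hp]; linarith⟩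
      ⟨by linarith, le_refl x⟩
    simp only [hp]; linarith
  have h2 : f x ≤ f p := by
    apply hbmin
    rw [Real.dist_eq, hp, abs_lt]
    constructor <;> nlinarith [min_le_right a b]
  linarith

lemma exp_hasDerivAt (a b t : ℝ) :
    HasDerivAt (fun t => Real.exp (a * (t - b))) (a * Real.exp (a * (t - b))) t := by
  have h1 : HasDerivAt (fun t : ℝ => a * (t - b)) a t := by
    simpa using ((hasDerivAt_id t).sub_const b).const_mul a
  simpa [mul_comm] using h1.exp

/-- Half-line comparison lemma. -/
lemma halfline (θ δ R : ℝ) (hθ : 0 < θ) (hδ : 0 < δ)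
    (g : ℝ → ℝ) (hC2 : ContDiff ℝ 2 g)
    (hpos : ∀ t, 0 < g t)
    (hsuper : ∀ t, R < t → deriv (deriv g) t ≤ 2 * θ * g t)
    (hbdry : δ ≤ g R) :
    ∀ t, R ≤ t → δ * Real.exp (-Real.sqrt (2*θ) * (t - R)) ≤ g t := by
  set μ := Real.sqrt (2*θ) with hμdef
  have hμpos : 0 < μ := Real.sqrt_pos.mpr (by linarith)
  have hμsq : μ * μ = 2 * θ := Real.mul_self_sqrt (by linarith)
  intro t0 ht0
  have hC0 : 0 < Real.exp (μ * (t0 - R)) := Real.exp_pos _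
  refine le_of_forall_pos_le_add (fun ε' hε' => ?_)
  set ε := ε' / Real.exp (μ * (t0 - R)) with hεdef
  have hε : 0 < ε := div_pos hε' hC0
  set φ : ℝ → ℝ := fun t => (-δ) * Real.exp ((-μ) * (t - R)) + ε * Real.exp (μ * (t - R))
    with hφdef
  set h : ℝ → ℝ := fun t => g t + φ t with hhdef
  have hφ' : ∀ t, HasDerivAt φ
      (δ * μ * Real.exp ((-μ) * (t - R)) + ε * μ * Real.exp (μ * (t - R))) t := by
    intro t
    have := ((exp_hasDerivAt (-μ) R t).const_mul (-δ)).fun_add ((exp_hasDerivAt μ R t).const_mul ε)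
    refine this.congr_deriv ?_
    ring
  have hφ'' : ∀ t, HasDerivAt
      (fun t => δ * μ * Real.exp ((-μ) * (t - R)) + ε * μ * Real.exp (μ * (t - R)))
      (2 * θ * φ t) t := by
    intro t
    have := ((exp_hasDerivAt (-μ) R t).const_mul (δ * μ)).fun_add
      ((exp_hasDerivAt μ R t).const_mul (ε * μ))
    refine this.congr_deriv ?_
    symm
    simp only [hφdef]
    linear_combination (δ * Real.exp ((-μ) * (t - R)) - ε * Real.exp (μ * (t - R))) * hμsq
  have hφC : ContDiff ℝ 2 φ := by
    apply ContDiff.add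
    · exact contDiff_const.mul
        (Real.contDiff_exp.comp (contDiff_const.mul (contDiff_id.sub contDiff_const)))
    · exact contDiff_const.mul
        (Real.contDiff_exp.comp (contDiff_const.mul (contDiff_id.sub contDiff_const)))
  have hderφ : deriv φ =
      fun t => δ * μ * Real.exp ((-μ) * (t - R)) + ε * μ * Real.exp (μ * (t - R)) :=
    funext fun t => (hφ' t).deriv
  have hder2φ : ∀ t, deriv (deriv φ) t = 2 * θ * φ t := by
    intro t
    rw [hderφ]
    exact (hφ'' t).deriv
  obtain ⟨hgd, hgd1, hgc2⟩ := c2_parts hC2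
  obtain ⟨hφd, hφd1, hφc2⟩ := c2_parts hφC
  have hhC : ContDiff ℝ 2 h := hC2.add hφC
  have hderh : deriv h = fun t => deriv g t + deriv φ t :=
    funext fun t => deriv_add (hgd t) (hφd t)
  have hder2h : ∀ t, deriv (deriv h) t = deriv (deriv g) t + 2 * θ * φ t := by
    intro t
    rw [hderh, deriv_fun_add (hgd1 t) (hφd1 t), hder2φ]
  set Z := max t0 (R + δ / (ε * μ)) with hZdef
  have hZt0 : t0 ≤ Z := le_max_left _ _
  have hZR : R ≤ Z := le_trans ht0 hZt0
  have hεμ : 0 < ε * μ := mul_pos hε hμpos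
  have hεexpZ : δ ≤ ε * Real.exp (μ * (Z - R)) := by
    have he2 : μ * (Z - R) ≤ Real.exp (μ * (Z - R)) := by
      linarith [Real.add_one_le_exp (μ * (Z - R))]
    have hZge : R + δ / (ε * μ) ≤ Z := le_max_right _ _
    have h3 : δ / (ε * μ) ≤ Z - R := by linarith
    have h4 : δ ≤ (Z - R) * (ε * μ) := by
      rw [div_le_iff₀ hεμ] at h3; linarith
    nlinarith
  have hhZ : 0 < h Z := by
    have he0 : Real.exp ((-μ) * (Z - R)) ≤ 1 := Real.exp_le_one_iff.mpr (by nlinarith)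
    have hgZ := hpos Z
    simp only [hhdef, hφdef]
    nlinarith
  have hhR : 0 < h R := by
    simp only [hhdef, hφdef, sub_self, mul_zero, Real.exp_zero, mul_one]
    linarith
  have hmain : ∀ t ∈ Icc R Z, 0 ≤ h t := by
    by_contra hcon
    push_neg at hcon
    obtain ⟨t1, ht1, ht1neg⟩ := hcon
    obtain ⟨z0, hz0mem, hz0min⟩ := (isCompact_Icc).exists_isMinOn
      ⟨R, left_mem_Icc.mpr hZR⟩ (hhC.continuous.continuousOn)
    have hz0neg : h z0 < 0 := lt_of_le_of_lt (hz0min ht1) ht1neg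
    have hz0R : R < z0 := lt_of_le_of_ne hz0mem.1 (by rintro rfl; linarith)
    have hz0Z : z0 < Z := lt_of_le_of_ne hz0mem.2 (by intro hzz; rw [hzz] at hz0neg; linarith)
    have hloc : IsLocalMin h z0 := hz0min.isLocalMin (Icc_mem_nhds hz0R hz0Z)
    have hge : 0 ≤ deriv (deriv h) z0 := deriv2_nonneg_of_isLocalMin hhC hloc
    have he := hder2h z0
    have hsup := hsuper z0 hz0R
    have heq : h z0 = g z0 + φ z0 := rfl
    nlinarith [mul_pos hθ (neg_pos.mpr hz0neg)]
  have h0 : 0 ≤ h t0 := hmain t0 ⟨ht0, hZt0⟩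
  have hεC : ε * Real.exp (μ * (t0 - R)) = ε' := div_mul_cancel₀ _ (ne_of_gt hC0)
  simp only [hhdef, hφdef] at h0
  linarith [h0, hεC]

/-- One-dimensional lower bound on the tails of the modified eigenfunction: if a
positive bounded `C²` function `Γ` satisfies `-Γ'' ≥ -2θΓ` for `|z| > R` and
`Γ ≥ δ` on `|z| = R`, then `Γ(z) ≥ δ e^{-√(2θ)(|z|-R)}` for `|z| ≥ R`. -/
theorem stmt14 (θ c B R δ : ℝ) (hθ : 0 < θ) (hc : 0 ≤ c) (hB : 0 < B)
    (hR : 0 < R) (hδ : 0 < δ)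
    (Γ : ℝ → ℝ) (hC2 : ContDiff ℝ 2 Γ)
    (hpos : ∀ z : ℝ, 0 < Γ z)
    (hbd : ∃ U : ℝ, ∀ z : ℝ, Γ z ≤ U)
    (hsuper : ∀ z : ℝ, R < |z| → -(deriv (deriv Γ) z) ≥ -(2*θ) * Γ z)
    (hbdry : ∀ z : ℝ, |z| = R → δ ≤ Γ z) :
    ∀ z : ℝ, R ≤ |z| → δ * Real.exp (-Real.sqrt (2*θ) * (|z| - R)) ≤ Γ z := by
  intro z hz
  rcases le_or_gt 0 z with hz0 | hz0
  · have habs : |z| = z := abs_of_nonneg hz0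
    rw [habs] at hz ⊢
    apply halfline θ δ R hθ hδ Γ hC2 hpos ?_ ?_ z hz
    · intro t ht
      have h1 := hsuper t (by rw [abs_of_pos (lt_trans hR ht)]; exact ht)
      linarith
    · exact hbdry R (abs_of_pos hR)
  · have habs : |z| = -z := abs_of_neg hz0
    rw [habs] at hz ⊢
    set g : ℝ → ℝ := fun t => Γ (-t) with hgdef
    have hgC2 : ContDiff ℝ 2 g := hC2.comp contDiff_neg
    have hΓd : Differentiable ℝ (deriv Γ) := (c2_parts hC2).2.1
    have hd1 : deriv g = fun t => -deriv Γ (-t) := funext fun t => deriv_comp_neg Γ t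
    have hg2 : ∀ t, deriv (deriv g) t = deriv (deriv Γ) (-t) := by
      intro t
      rw [hd1, deriv.fun_neg, deriv_comp_neg, neg_neg]
    have := halfline θ δ R hθ hδ g hgC2 (fun t => hpos (-t)) ?_ ?_ (-z) hz
    · simpa [hgdef] using this
    · intro t ht
      rw [hg2]
      have h1 := hsuper (-t) (by rw [abs_neg, abs_of_pos (lt_trans hR ht)]; exact ht)
      linarith
    · exact hbdry (-R) (by rw [abs_neg, abs_of_pos hR])
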